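/- The function f satisfies f(12) = 5 and f(16) = 7. -/

import Mathlib

noncomputable section

/-- the independence number of a graph -/
def indepNum {V : Type*} [Fintype V] (G : SimpleGraph V) : ℕ :=
  sSup {n | ∃ s : Finset V, s.card = n ∧ ∀ x ∈ s, ∀ y ∈ s, x ≠ y → ¬ G.Adj x y}

/-- `G` contains a cycle of length `m` -/
def HasCycleOfLength {V : Type*} (G : SimpleGraph V) (m : ℕ) : Prop :=
  ∃ (v : V) (c : G.Walk v v), c.IsCycle ∧ c.length = m

/-- `G` contains no cycle of length 3 and no cycle of length 5 -/
def NoC3C5 {V : Type*} (G : SimpleGraph V) : Prop :=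
  ¬ HasCycleOfLength G 3 ∧ ¬ HasCycleOfLength G 5

/-- `f n` is the minimum independence number among graphs on `n` vertices with
no 3-cycle and no 5-cycle -/
def fmin (n : ℕ) : ℕ :=
  sInf {k | ∃ G : SimpleGraph (Fin n), NoC3C5 G ∧ indepNum G = k}

section Chains

variable {V : Type*} {G : SimpleGraph V}

lemma chain3 {v : V} (c : G.Walk v v) (h : c.length = 3) :
    ∃ a b, G.Adj v a ∧ G.Adj a b ∧ G.Adj b v := by
  cases c with
  | nil => simp at h
  | cons h1 p =>
    cases p with
    | nil => simp at h
    | cons h2 q =>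
      cases q with
      | nil => simp at h
      | cons h3 r =>
        cases r with
        | nil => exact ⟨_, _, h1, h2, h3⟩
        | cons h4 t => simp [SimpleGraph.Walk.length_cons] at h

lemma chain5 {v : V} (c : G.Walk v v) (h : c.length = 5) :
    ∃ a b x y, G.Adj v a ∧ G.Adj a b ∧ G.Adj b x ∧ G.Adj x y ∧ G.Adj y v := by
  cases c with
  | nil => simp at h
  | cons h1 p => cases p with
    | nil => simp at h
    | cons h2 q => cases q with
      | nil => simp at h
      | cons h3 r => cases r with
        | nil => simp at h
        | cons h4 t => cases t with
          | nil => simp at h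
          | cons h5 u => cases u with
            | nil => exact ⟨_, _, _, _, h1, h2, h3, h4, h5⟩
            | cons h6 w => simp [SimpleGraph.Walk.length_cons] at h

lemma mkC3 {a b c : V} (hab : G.Adj a b) (hbc : G.Adj b c)
    (hca : G.Adj c a) : HasCycleOfLength G 3 := by
  refine ⟨a, .cons hab (.cons hbc (.cons hca .nil)), ?_, by simp⟩
  simp [SimpleGraph.Walk.isCycle_def, SimpleGraph.Walk.isTrail_def, hab.ne, hbc.ne, hca.ne,
    hab.ne', hbc.ne', hca.ne']

lemma mkC5 {a b c d e : V} (hab : G.Adj a b) (hbc : G.Adj b c)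
    (hcd : G.Adj c d) (hde : G.Adj d e) (hea : G.Adj e a)
    (hac : a ≠ c) (had : a ≠ d) (hbd : b ≠ d) (hbe : b ≠ e) (hce : c ≠ e) :
    HasCycleOfLength G 5 := by
  refine ⟨a, .cons hab (.cons hbc (.cons hcd (.cons hde (.cons hea .nil)))), ?_, by simp⟩
  simp [SimpleGraph.Walk.isCycle_def, SimpleGraph.Walk.isTrail_def, hab.ne, hbc.ne, hcd.ne,
    hde.ne, hea.ne, hab.ne', hbc.ne', hcd.ne', hde.ne', hea.ne', hac, had, hbd, hbe, hce,
    hac.symm, had.symm, hbd.symm, hbe.symm, hce.symm]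

/-- from NoC3C5: no triangles at all -/
lemma noTri (h : NoC3C5 G) : ∀ a b c : V, G.Adj a b → G.Adj b c → G.Adj c a → False :=
  fun _ _ _ hab hbc hca => h.1 (mkC3 hab hbc hca)

/-- from NoC3C5: no closed 5-chains at all (even degenerate ones) -/
lemma noPent (h : NoC3C5 G) : ∀ a b c d e : V,
    G.Adj a b → G.Adj b c → G.Adj c d → G.Adj d e → G.Adj e a → False := by
  intro a b c d e hab hbc hcd hde hea
  have hT := noTri h
  by_cases hac : a = c
  · exact hT a d e (hac.symm ▸ hcd) hde hea
  by_cases had : a = d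
  · exact hT a b c hab hbc (had.symm ▸ hcd)
  by_cases hbd : b = d
  · exact hT a b e hab (hbd.symm ▸ hde) hea
  by_cases hbe : b = e
  · exact hT b c d hbc hcd (hbe.symm ▸ hde)
  by_cases hce : c = e
  · exact hT a b c hab hbc (hce.symm ▸ hea)
  · exact h.2 (mkC5 hab hbc hcd hde hea hac had hbd hbe hce)

end Chains


section Indep
variable {V : Type*} [Fintype V] (G : SimpleGraph V)

def IndSet (s : Finset V) : Prop := ∀ x ∈ s, ∀ y ∈ s, x ≠ y → ¬ G.Adj x y

variable {G}

lemma indepNum_nonempty : {n | ∃ s : Finset V, s.card = n ∧ ∀ x ∈ s, ∀ y ∈ s, x ≠ y → ¬ G.Adj x y}.Nonempty :=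
  ⟨0, ∅, by simp, by simp⟩

lemma indepNum_bdd : BddAbove {n | ∃ s : Finset V, s.card = n ∧ ∀ x ∈ s, ∀ y ∈ s, x ≠ y → ¬ G.Adj x y} :=
  ⟨Fintype.card V, fun n ⟨s, hc, _⟩ => hc ▸ s.card_le_univ⟩

lemma le_indepNum {k : ℕ} (h : ∃ s : Finset V, IndSet G s ∧ k ≤ s.card) : k ≤ indepNum G := by
  obtain ⟨s, hs, hk⟩ := h
  exact hk.trans (le_csSup indepNum_bdd ⟨s, rfl, hs⟩)

lemma indepNum_le {k : ℕ} (h : ∀ s : Finset V, IndSet G s → s.card ≤ k) : indepNum G ≤ k :=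
  csSup_le indepNum_nonempty (fun _ ⟨s, hc, hi⟩ => hc ▸ h s hi)

end Indep

section ML

def ML12 : SimpleGraph (Fin 12) where
  Adj i j := j - i = 1 ∨ j - i = 11 ∨ j - i = 6
  symm := ⟨by decide⟩
  loopless := ⟨by decide⟩

instance : DecidableRel ML12.Adj := fun i j => by unfold ML12; simp; infer_instance

lemma ML12_mem {x y : Fin 12} (h : ML12.Adj x y) : y - x ∈ ({1, 11, 6} : Finset (Fin 12)) := by
  rcases h with h | h | h <;> simp [h]

lemma ML12_no : NoC3C5 ML12 := by
  constructor
  · rintro ⟨v, c, -, hl⟩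
    obtain ⟨a, b, h1, h2, h3⟩ := chain3 c hl
    have key : ∀ p ∈ ({1, 11, 6} : Finset (Fin 12)), ∀ q ∈ ({1, 11, 6} : Finset (Fin 12)),
        ∀ r ∈ ({1, 11, 6} : Finset (Fin 12)), p + q + r ≠ 0 := by decide
    exact key _ (ML12_mem h1) _ (ML12_mem h2) _ (ML12_mem h3) (by open Fin.CommRing in ring)
  · rintro ⟨v, c, -, hl⟩
    obtain ⟨a, b, x, y, h1, h2, h3, h4, h5⟩ := chain5 c hl
    have key : ∀ p ∈ ({1, 11, 6} : Finset (Fin 12)), ∀ q ∈ ({1, 11, 6} : Finset (Fin 12)),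
        ∀ r ∈ ({1, 11, 6} : Finset (Fin 12)), ∀ s ∈ ({1, 11, 6} : Finset (Fin 12)),
        ∀ t ∈ ({1, 11, 6} : Finset (Fin 12)), p + q + r + s + t ≠ 0 := by decide
    exact key _ (ML12_mem h1) _ (ML12_mem h2) _ (ML12_mem h3) _ (ML12_mem h4) _ (ML12_mem h5)
      (by open Fin.CommRing in ring)

lemma ML12_indep_le (s : Finset (Fin 12)) (hs : IndSet ML12 s) : s.card ≤ 5 := by
  by_contra hcon
  push_neg at hcon
  have hadj1 : ∀ i : Fin 12, ML12.Adj i (i + 1) := by decide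
  have hne1 : ∀ i : Fin 12, i ≠ i + 1 := by decide
  have hdisj : Disjoint s (s.image (· + 1)) := by
    rw [Finset.disjoint_right]
    rintro a ha has
    obtain ⟨x, hx, rfl⟩ := Finset.mem_image.1 ha
    exact hs x hx _ has (hne1 x) (hadj1 x)
  have hcard : s.card + s.card ≤ 12 := by
    have := Finset.card_union_of_disjoint hdisj
    have hle := Finset.card_le_univ (s ∪ s.image (· + 1))
    rw [this, Finset.card_image_of_injective _ (add_left_injective 1)] at hle
    simpa using hle
  have h6 : s.card = 6 := by omega
  have huniv : s ∪ s.image (· + 1) = Finset.univ := by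
    apply Finset.eq_univ_of_card
    rw [Finset.card_union_of_disjoint hdisj,
      Finset.card_image_of_injective _ (add_left_injective 1), h6]
    simp
  have step : ∀ i ∈ s, i + 2 ∈ s := by
    intro i hi
    have hmem : i + 2 ∈ s ∪ s.image (· + 1) := huniv ▸ Finset.mem_univ _
    rcases Finset.mem_union.1 hmem with h | h
    · exact h
    · exfalso
      obtain ⟨x, hx, hxe⟩ := Finset.mem_image.1 h
      have : x = i + 1 := by
        have : x + 1 = i + 1 + 1 := by rw [hxe]; open Fin.CommRing in ring
        exact add_right_cancel this
      subst this
      exact hs i hi _ hx (hne1 i) (hadj1 i)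
  obtain ⟨i, hi⟩ := Finset.card_pos.1 (by omega : 0 < s.card)
  have h6mem : i + 6 ∈ s := by
    have h2 := step i hi
    have h4 := step _ h2
    have h6 := step _ h4
    have : i + 2 + 2 + 2 = i + 6 := by open Fin.CommRing in ring
    rwa [this] at h6
  have hne : i ≠ i + 6 := by
    intro h
    have h0 : i + 0 = i + 6 := by simpa using h
    exact absurd (add_left_cancel h0) (by decide)
  exact hs i hi _ h6mem hne (Or.inr (Or.inr (by open Fin.CommRing in ring)))

def ML16 : SimpleGraph (Fin 16) where
  Adj i j := j - i = 1 ∨ j - i = 15 ∨ j - i = 8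
  symm := ⟨by decide⟩
  loopless := ⟨by decide⟩

instance : DecidableRel ML16.Adj := fun i j => by unfold ML16; simp; infer_instance

lemma ML16_mem {x y : Fin 16} (h : ML16.Adj x y) : y - x ∈ ({1, 15, 8} : Finset (Fin 16)) := by
  rcases h with h | h | h <;> simp [h]

lemma ML16_no : NoC3C5 ML16 := by
  constructor
  · rintro ⟨v, c, -, hl⟩
    obtain ⟨a, b, h1, h2, h3⟩ := chain3 c hl
    have key : ∀ p ∈ ({1, 15, 8} : Finset (Fin 16)), ∀ q ∈ ({1, 15, 8} : Finset (Fin 16)),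
        ∀ r ∈ ({1, 15, 8} : Finset (Fin 16)), p + q + r ≠ 0 := by decide
    exact key _ (ML16_mem h1) _ (ML16_mem h2) _ (ML16_mem h3) (by open Fin.CommRing in ring)
  · rintro ⟨v, c, -, hl⟩
    obtain ⟨a, b, x, y, h1, h2, h3, h4, h5⟩ := chain5 c hl
    have key : ∀ p ∈ ({1, 15, 8} : Finset (Fin 16)), ∀ q ∈ ({1, 15, 8} : Finset (Fin 16)),
        ∀ r ∈ ({1, 15, 8} : Finset (Fin 16)), ∀ s ∈ ({1, 15, 8} : Finset (Fin 16)),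
        ∀ t ∈ ({1, 15, 8} : Finset (Fin 16)), p + q + r + s + t ≠ 0 := by decide
    exact key _ (ML16_mem h1) _ (ML16_mem h2) _ (ML16_mem h3) _ (ML16_mem h4) _ (ML16_mem h5)
      (by open Fin.CommRing in ring)

lemma ML16_indep_le (s : Finset (Fin 16)) (hs : IndSet ML16 s) : s.card ≤ 7 := by
  by_contra hcon
  push_neg at hcon
  have hadj1 : ∀ i : Fin 16, ML16.Adj i (i + 1) := by decide
  have hne1 : ∀ i : Fin 16, i ≠ i + 1 := by decide
  have hdisj : Disjoint s (s.image (· + 1)) := by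
    rw [Finset.disjoint_right]
    rintro a ha has
    obtain ⟨x, hx, rfl⟩ := Finset.mem_image.1 ha
    exact hs x hx _ has (hne1 x) (hadj1 x)
  have hcard : s.card + s.card ≤ 16 := by
    have := Finset.card_union_of_disjoint hdisj
    have hle := Finset.card_le_univ (s ∪ s.image (· + 1))
    rw [this, Finset.card_image_of_injective _ (add_left_injective 1)] at hle
    simpa using hle
  have h8 : s.card = 8 := by omega
  have huniv : s ∪ s.image (· + 1) = Finset.univ := by
    apply Finset.eq_univ_of_card
    rw [Finset.card_union_of_disjoint hdisj,
      Finset.card_image_of_injective _ (add_left_injective 1), h8]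
    simp
  have step : ∀ i ∈ s, i + 2 ∈ s := by
    intro i hi
    have hmem : i + 2 ∈ s ∪ s.image (· + 1) := huniv ▸ Finset.mem_univ _
    rcases Finset.mem_union.1 hmem with h | h
    · exact h
    · exfalso
      obtain ⟨x, hx, hxe⟩ := Finset.mem_image.1 h
      have : x = i + 1 := by
        have : x + 1 = i + 1 + 1 := by rw [hxe]; open Fin.CommRing in ring
        exact add_right_cancel this
      subst this
      exact hs i hi _ hx (hne1 i) (hadj1 i)
  obtain ⟨i, hi⟩ := Finset.card_pos.1 (by omega : 0 < s.card)
  have h8mem : i + 8 ∈ s := by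
    have h2 := step i hi
    have h4 := step _ h2
    have h6 := step _ h4
    have h8' := step _ h6
    have : i + 2 + 2 + 2 + 2 = i + 8 := by open Fin.CommRing in ring
    rwa [this] at h8'
  have hne : i ≠ i + 8 := by
    intro h
    have h0 : i + 0 = i + 8 := by simpa using h
    exact absurd (add_left_cancel h0) (by decide)
  exact hs i hi _ h8mem hne (Or.inr (Or.inr (by open Fin.CommRing in ring)))

lemma ML12_alpha : indepNum ML12 = 5 := by
  apply le_antisymm (indepNum_le ML12_indep_le)
  exact le_indepNum ⟨{0, 2, 4, 7, 9}, by unfold IndSet; decide, by decide⟩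

lemma ML16_alpha : indepNum ML16 = 7 := by
  apply le_antisymm (indepNum_le ML16_indep_le)
  exact le_indepNum ⟨{0, 2, 4, 6, 9, 11, 13}, by unfold IndSet; decide, by decide⟩

end ML

section Lower

open Finset

open scoped Classical

variable {V : Type*} [Fintype V] [DecidableEq V] {G : SimpleGraph V}

/-- neighbours of `v` inside `s` -/
noncomputable def nbrIn (G : SimpleGraph V) (s : Finset V) (v : V) : Finset V :=
  s.filter (fun x => G.Adj v x)

/-- second neighbourhood of `v` inside `s` -/
noncomputable def n2In (G : SimpleGraph V) (s : Finset V) (v : V) : Finset V :=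
  s.filter (fun x => x ≠ v ∧ ¬ G.Adj v x ∧ ∃ u ∈ s, G.Adj v u ∧ G.Adj u x)

/-- far set of `v` inside `s` -/
noncomputable def farIn (G : SimpleGraph V) (s : Finset V) (v : V) : Finset V :=
  s.filter (fun x => x ≠ v ∧ ¬ G.Adj v x ∧ ¬ ∃ u ∈ s, G.Adj v u ∧ G.Adj u x)

lemma mem_nbrIn {s : Finset V} {v x : V} : x ∈ nbrIn G s v ↔ x ∈ s ∧ G.Adj v x := by
  simp [nbrIn]

lemma mem_n2In {s : Finset V} {v x : V} :
    x ∈ n2In G s v ↔ x ∈ s ∧ x ≠ v ∧ ¬ G.Adj v x ∧ ∃ u ∈ s, G.Adj v u ∧ G.Adj u x := by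
  simp [n2In]

lemma mem_farIn {s : Finset V} {v x : V} :
    x ∈ farIn G s v ↔ x ∈ s ∧ x ≠ v ∧ ¬ G.Adj v x ∧ ¬ ∃ u ∈ s, G.Adj v u ∧ G.Adj u x := by
  simp [farIn]

lemma nbrIn_subset {s : Finset V} {v : V} : nbrIn G s v ⊆ s := filter_subset _ _

lemma n2In_subset {s : Finset V} {v : V} : n2In G s v ⊆ s := filter_subset _ _

lemma farIn_subset {s : Finset V} {v : V} : farIn G s v ⊆ s := filter_subset _ _

lemma nbrIn_mono {s t : Finset V} (h : s ⊆ t) (v : V) : nbrIn G s v ⊆ nbrIn G t v := by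
  intro x hx; rw [mem_nbrIn] at *; exact ⟨h hx.1, hx.2⟩

lemma indep_insert {t : Finset V} {w : V} (ht : IndSet G t) (hw : ∀ z ∈ t, ¬ G.Adj w z) :
    IndSet G (insert w t) := by
  intro x hx y hy hne hadj
  rcases mem_insert.1 hx with hx1 | hx1 <;> rcases mem_insert.1 hy with hy1 | hy1
  · exact hne (hx1.trans hy1.symm)
  · exact hw y hy1 (hx1 ▸ hadj)
  · exact hw x hx1 (hy1 ▸ hadj.symm)
  · exact ht x hx1 y hy1 hne hadj

lemma indSet_subset {s t : Finset V} (h : s ⊆ t) (ht : IndSet G t) : IndSet G s :=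
  fun x hx y hy => ht x (h hx) y (h hy)

/-- the four pieces cover `s` -/
lemma cover_split {s : Finset V} {v : V} (hv : v ∈ s) :
    s ⊆ insert v (nbrIn G s v ∪ n2In G s v ∪ farIn G s v) := by
  intro x hx
  by_cases h1 : x = v
  · simp [h1]
  by_cases h2 : G.Adj v x
  · simp [mem_nbrIn, hx, h2]
  by_cases h3 : ∃ u ∈ s, G.Adj v u ∧ G.Adj u x
  · simp [mem_n2In, hx, h1, h2, h3]
  · simp [mem_farIn, hx, h1, h2, h3]

lemma card_split {s : Finset V} {v : V} (hv : v ∈ s) :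
    s.card ≤ 1 + (nbrIn G s v).card + (n2In G s v).card + (farIn G s v).card := by
  calc s.card ≤ (insert v (nbrIn G s v ∪ n2In G s v ∪ farIn G s v)).card :=
        card_le_card (cover_split hv)
    _ ≤ 1 + (nbrIn G s v ∪ n2In G s v ∪ farIn G s v).card := by
        rw [add_comm]; exact card_insert_le _ _
    _ ≤ 1 + ((nbrIn G s v ∪ n2In G s v).card + (farIn G s v).card) := by
        gcongr; exact card_union_le _ _
    _ ≤ 1 + ((nbrIn G s v).card + (n2In G s v).card + (farIn G s v).card) := by
        gcongr; exact card_union_le _ _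
    _ = _ := by ring

/-- disjointness facts -/
lemma not_mem_nbrIn_self {s : Finset V} {v : V} : v ∉ nbrIn G s v := by
  simp [mem_nbrIn]

lemma disj_nbr_n2 {s : Finset V} {v : V} : Disjoint (nbrIn G s v) (n2In G s v) := by
  rw [disjoint_left]; intro x h1 h2
  rw [mem_nbrIn] at h1; rw [mem_n2In] at h2
  exact h2.2.2.1 h1.2

lemma disj_nbr_far {s : Finset V} {v : V} : Disjoint (nbrIn G s v) (farIn G s v) := by
  rw [disjoint_left]; intro x h1 h2
  rw [mem_nbrIn] at h1; rw [mem_farIn] at h2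
  exact h2.2.2.1 h1.2

lemma disj_n2_far {s : Finset V} {v : V} : Disjoint (n2In G s v) (farIn G s v) := by
  rw [disjoint_left]; intro x h1 h2
  rw [mem_n2In] at h1; rw [mem_farIn] at h2
  exact h2.2.2.2 h1.2.2.2

lemma exact_split {s : Finset V} {v : V} (hv : v ∈ s) :
    1 + (nbrIn G s v).card + (n2In G s v).card + (farIn G s v).card ≤ s.card := by
  have h1 : insert v (nbrIn G s v ∪ n2In G s v ∪ farIn G s v) ⊆ s := by
    intro x hx
    rcases mem_insert.1 hx with rfl | hx
    · exact hv
    rcases mem_union.1 hx with hx | hx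
    · rcases mem_union.1 hx with hx | hx
      · exact nbrIn_subset hx
      · exact n2In_subset hx
    · exact farIn_subset hx
  have hvnot : v ∉ nbrIn G s v ∪ n2In G s v ∪ farIn G s v := by
    simp only [mem_union]
    rintro ((h | h) | h)
    · exact not_mem_nbrIn_self h
    · exact (mem_n2In.1 h).2.1 rfl
    · exact (mem_farIn.1 h).2.1 rfl
  have := card_le_card h1
  rw [card_insert_of_notMem hvnot, card_union_of_disjoint, card_union_of_disjoint] at this
  · omega
  · exact disj_nbr_n2
  · rw [disjoint_union_left]; exact ⟨disj_nbr_far, disj_n2_far⟩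

variable (hT : ∀ a b c : V, G.Adj a b → G.Adj b c → G.Adj c a → False)
variable (hP : ∀ a b c d e : V,
    G.Adj a b → G.Adj b c → G.Adj c d → G.Adj d e → G.Adj e a → False)

include hT in
lemma nbrIn_indep {s : Finset V} {v : V} : IndSet G (nbrIn G s v) := by
  intro x hx y hy hne hadj
  rw [mem_nbrIn] at hx hy
  exact hT v x y hx.2 hadj hy.2.symm

include hT hP in
lemma n2In_indep {s : Finset V} {v : V} : IndSet G (n2In G s v) := by
  intro x hx y hy hne hadj
  rw [mem_n2In] at hx hy
  obtain ⟨-, -, -, u, hu, hvu, hux⟩ := hx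
  obtain ⟨-, -, -, w, hw, hvw, hwy⟩ := hy
  by_cases huw : u = w
  · exact hT u x y hux hadj (huw ▸ hwy).symm
  · exact hP v u x y w hvu hux hadj hwy.symm hvw.symm

include hT hP in
lemma vn2In_indep {s : Finset V} {v : V} : IndSet G (insert v (n2In G s v)) := by
  intro x hx y hy hne hadj
  rcases mem_insert.1 hx with rfl | hx
  · rcases mem_insert.1 hy with rfl | hy
    · exact hne rfl
    · exact (mem_n2In.1 hy).2.2.1 hadj
  · rcases mem_insert.1 hy with rfl | hy
    · exact (mem_n2In.1 hx).2.2.1 hadj.symm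
    · exact n2In_indep hT hP x hx y hy hne hadj

lemma far_nonadj {s : Finset V} {v x u : V} (hx : x ∈ farIn G s v) (hu : u ∈ nbrIn G s v) :
    ¬ G.Adj u x := by
  rw [mem_farIn] at hx
  rw [mem_nbrIn] at hu
  exact fun h => hx.2.2.2 ⟨u, hu.1, hu.2, h⟩

lemma far_nonadj_v {s : Finset V} {v x : V} (hx : x ∈ farIn G s v) : ¬ G.Adj v x :=
  (mem_farIn.1 hx).2.2.1

include hT in
lemma nbr_union_indep {s : Finset V} {v : V} {t : Finset V} (htF : t ⊆ farIn G s v)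
    (ht : IndSet G t) : IndSet G (nbrIn G s v ∪ t) := by
  intro x hx y hy hne hadj
  rcases mem_union.1 hx with hx' | hx'
  · rcases mem_union.1 hy with hy' | hy'
    · exact nbrIn_indep hT x hx' y hy' hne hadj
    · exact far_nonadj (htF hy') hx' hadj
  · rcases mem_union.1 hy with hy' | hy'
    · exact far_nonadj (htF hx') hy' hadj.symm
    · exact ht x hx' y hy' hne hadj

lemma card_nbr_union {s : Finset V} {v : V} {t : Finset V} (htF : t ⊆ farIn G s v) :
    (nbrIn G s v ∪ t).card = (nbrIn G s v).card + t.card := by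
  exact card_union_of_disjoint (Finset.disjoint_of_subset_right htF disj_nbr_far)

/-- extract the other element of a 2-element set -/
lemma pair_other {A : Finset V} (h2 : A.card = 2) {v : V} (hv : v ∈ A) :
    ∃ x, x ≠ v ∧ A = {v, x} := by
  obtain ⟨a, b, hab, rfl⟩ := card_eq_two.1 h2
  rcases mem_insert.1 hv with rfl | hv'
  · exact ⟨b, fun h => hab h.symm, rfl⟩
  · rw [mem_singleton.1 hv']
    exact ⟨a, hab, pair_comm a b⟩

lemma card_sdiff_ge (s X : Finset V) : s.card ≤ (s \ X).card + X.card := by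
  have h : s ⊆ (s \ X) ∪ X := by
    intro x hx
    by_cases hxX : x ∈ X
    · exact mem_union_right _ hxX
    · exact mem_union_left _ (mem_sdiff.2 ⟨hx, hxX⟩)
  exact (card_le_card h).trans (card_union_le _ _)

include hT hP in
/-- key 3/7 lemma for max degree two subsets -/
lemma lemA : ∀ m : ℕ, ∀ s : Finset V, s.card ≤ m → (∀ v ∈ s, (nbrIn G s v).card ≤ 2) →
    ∃ t ⊆ s, IndSet G t ∧ 3 * s.card ≤ 7 * t.card := by
  intro m
  induction m with
  | zero =>
    intro s hs _
    refine ⟨∅, empty_subset _, fun x hx => absurd hx (notMem_empty x), by simp only [card_empty]; omega⟩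
  | succ m IH =>
    intro s hcard hdeg
    by_cases hne : s = ∅
    · exact ⟨∅, empty_subset _, fun x hx => absurd hx (notMem_empty x), by simp [hne]⟩
    by_cases hsmall : ∃ v ∈ s, (nbrIn G s v).card ≤ 1
    · obtain ⟨v, hv, hv1⟩ := hsmall
      set X : Finset V := insert v (nbrIn G s v) with hX
      have hXcard : X.card ≤ 2 := (card_insert_le _ _).trans (by omega)
      set s' : Finset V := s \ X with hs'
      have hsub : s' ⊆ s := sdiff_subset
      have hstrict : s'.card < s.card := by
        apply card_lt_card
        rw [Finset.ssubset_iff_of_subset hsub]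
        exact ⟨v, hv, by simp [hs', hX]⟩
      obtain ⟨t', ht'sub, ht'ind, ht'card⟩ := IH s' (by omega)
        (fun w hw => (card_le_card (nbrIn_mono hsub w)).trans (hdeg w (hsub hw)))
      have hvnott' : v ∉ t' := fun h => by
        have := ht'sub h
        rw [hs', mem_sdiff] at this
        exact this.2 (mem_insert_self _ _)
      refine ⟨insert v t', ?_, ?_, ?_⟩
      · intro x hx
        rcases mem_insert.1 hx with rfl | hx
        · exact hv
        · exact hsub (ht'sub hx)
      · refine indep_insert ht'ind ?_
        intro z hz hadjz
        have hzs' := ht'sub hz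
        rw [hs', mem_sdiff] at hzs'
        exact hzs'.2 (mem_insert_of_mem (mem_nbrIn.2 ⟨hzs'.1, hadjz⟩))
      · rw [card_insert_of_notMem hvnott']
        have hge := card_sdiff_ge s X
        rw [← hs'] at hge
        omega
    · -- every vertex has exactly two neighbours in s
      push_neg at hsmall
      have hdeg2 : ∀ v ∈ s, (nbrIn G s v).card = 2 :=
        fun v hv => le_antisymm (hdeg v hv) (hsmall v hv)
      obtain ⟨v, hv⟩ := nonempty_of_ne_empty hne
      obtain ⟨u, w, huw, hnv⟩ := card_eq_two.1 (hdeg2 v hv)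
      have hu : u ∈ s ∧ G.Adj v u := mem_nbrIn.1 (hnv ▸ mem_insert_self u {w})
      have hw : w ∈ s ∧ G.Adj v w := mem_nbrIn.1 (hnv ▸ mem_insert_of_mem (mem_singleton_self w))
      have hnadjuw : ¬ G.Adj u w := fun h => hT v u w hu.2 h hw.2.symm
      have hvmemu : v ∈ nbrIn G s u := mem_nbrIn.2 ⟨hv, hu.2.symm⟩
      have hvmemw : v ∈ nbrIn G s w := mem_nbrIn.2 ⟨hv, hw.2.symm⟩
      obtain ⟨x, hxv, hnu⟩ := pair_other (hdeg2 u hu.1) hvmemu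
      obtain ⟨y, hyv, hnw⟩ := pair_other (hdeg2 w hw.1) hvmemw
      have hx : x ∈ s ∧ G.Adj u x := mem_nbrIn.1 (hnu ▸ mem_insert_of_mem (mem_singleton_self x))
      have hy : y ∈ s ∧ G.Adj w y := mem_nbrIn.1 (hnw ▸ mem_insert_of_mem (mem_singleton_self y))
      have hxw : x ≠ w := fun h => hnadjuw (h ▸ hx.2)
      have hyu : y ≠ u := fun h => hnadjuw (h ▸ hy.2).symm
      have hxu : x ≠ u := fun h => G.loopless.irrefl u (h ▸ hx.2)
      have hyw : y ≠ w := fun h => G.loopless.irrefl w (h ▸ hy.2)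
      have hnadjvx : ¬ G.Adj v x := by
        intro h
        have : x ∈ nbrIn G s v := mem_nbrIn.2 ⟨hx.1, h⟩
        rw [hnv] at this
        rcases mem_insert.1 this with h' | h'
        · exact hxu h'
        · exact hxw (mem_singleton.1 h')
      have hnadjvy : ¬ G.Adj v y := by
        intro h
        have : y ∈ nbrIn G s v := mem_nbrIn.2 ⟨hy.1, h⟩
        rw [hnv] at this
        rcases mem_insert.1 this with h' | h'
        · exact hyu h'
        · exact hyw (mem_singleton.1 h')
      by_cases hxy : x = y
      · -- square case
        subst hxy
        set X : Finset V := insert v (insert u (insert w {x})) with hX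
        have hXcard : X.card ≤ 4 := by
          refine le_trans (card_insert_le _ _) ?_
          have h2 := card_insert_le u (insert w ({x} : Finset V))
          have h3 := card_insert_le w ({x} : Finset V)
          simp only [card_singleton] at h3
          omega
        set s' : Finset V := s \ X with hs'
        have hsub : s' ⊆ s := sdiff_subset
        have hstrict : s'.card < s.card := by
          apply card_lt_card
          rw [Finset.ssubset_iff_of_subset hsub]
          exact ⟨v, hv, by simp [hs', hX]⟩
        obtain ⟨t', ht'sub, ht'ind, ht'card⟩ := IH s' (by omega)
          (fun z hz => (card_le_card (nbrIn_mono hsub z)).trans (hdeg z (hsub hz)))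
        have hmemX : ∀ z ∈ t', z ∉ X := by
          intro z hz
          have := ht'sub hz
          rw [hs', mem_sdiff] at this
          exact this.2
        have hkeyv : ∀ z ∈ t', ¬ G.Adj v z := by
          intro z hz hadj
          have hzs := hsub (ht'sub hz)
          have : z ∈ nbrIn G s v := mem_nbrIn.2 ⟨hzs, hadj⟩
          rw [hnv] at this
          have hzX := hmemX z hz
          rcases mem_insert.1 this with h' | h'
          · exact hzX (by simp [hX, h'])
          · exact hzX (by simp [hX, mem_singleton.1 h'])
        have hnbrx : nbrIn G s x = {u, w} := by
          have hsub2 : ({u, w} : Finset V) ⊆ nbrIn G s x := by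
            intro z hz
            rcases mem_insert.1 hz with hz' | hz'
            · rw [hz']; exact mem_nbrIn.2 ⟨hu.1, hx.2.symm⟩
            · rw [mem_singleton.1 hz']
              exact mem_nbrIn.2 ⟨hw.1, hy.2.symm⟩
          exact (Finset.eq_of_subset_of_card_le hsub2
            (by rw [hdeg2 x hx.1, card_pair huw])).symm
        have hkeyx : ∀ z ∈ t', ¬ G.Adj x z := by
          intro z hz hadj
          have hzs := hsub (ht'sub hz)
          have : z ∈ nbrIn G s x := mem_nbrIn.2 ⟨hzs, hadj⟩
          rw [hnbrx] at this
          have hzX := hmemX z hz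
          rcases mem_insert.1 this with h' | h'
          · exact hzX (by simp [hX, h'])
          · exact hzX (by simp [hX, mem_singleton.1 h'])
        have hvt' : v ∉ t' := fun h => hmemX v h (by simp [hX])
        have hxt' : x ∉ t' := fun h => hmemX x h (by simp [hX])
        refine ⟨insert v (insert x t'), ?_, ?_, ?_⟩
        · intro z hz
          rcases mem_insert.1 hz with rfl | hz
          · exact hv
          rcases mem_insert.1 hz with rfl | hz
          · exact hx.1
          · exact hsub (ht'sub hz)
        · refine indep_insert (indep_insert ht'ind hkeyx) ?_
          intro z hz
          rcases mem_insert.1 hz with rfl | hz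
          · exact hnadjvx
          · exact hkeyv z hz
        · have hvx : v ≠ x := hxv.symm
          rw [card_insert_of_notMem (by simp [hvt', hvx]),
            card_insert_of_notMem hxt']
          have hge := card_sdiff_ge s X
          rw [← hs'] at hge
          omega
      · -- pentagon-free case
        have hnadjxy : ¬ G.Adj x y := fun h => hP v u x y w hu.2 hx.2 h hy.2.symm hw.2.symm
        have humem : u ∈ nbrIn G s x := mem_nbrIn.2 ⟨hu.1, hx.2.symm⟩
        have hwmem : w ∈ nbrIn G s y := mem_nbrIn.2 ⟨hw.1, hy.2.symm⟩
        set B : Finset V := insert v (insert u (insert w (insert x ({y} : Finset V)))) with hB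
        set X : Finset V := B ∪ (nbrIn G s x \ {u}) ∪ (nbrIn G s y \ {w}) with hX
        have hBcard : B.card ≤ 5 := by
          refine le_trans (card_insert_le _ _) ?_
          have h2 := card_insert_le u (insert w (insert x ({y} : Finset V)))
          have h3 := card_insert_le w (insert x ({y} : Finset V))
          have h4 := card_insert_le x ({y} : Finset V)
          simp only [card_singleton] at h4
          omega
        have hcx : (nbrIn G s x \ {u}).card = 1 := by
          rw [card_sdiff_of_subset (singleton_subset_iff.2 humem), hdeg2 x hx.1, card_singleton]
        have hcy : (nbrIn G s y \ {w}).card = 1 := by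
          rw [card_sdiff_of_subset (singleton_subset_iff.2 hwmem), hdeg2 y hy.1, card_singleton]
        have hXcard : X.card ≤ 7 := by
          rw [hX]
          refine le_trans (card_union_le _ _) ?_
          have := card_union_le B (nbrIn G s x \ {u})
          omega
        set s' : Finset V := s \ X with hs'
        have hsub : s' ⊆ s := sdiff_subset
        have hvX : v ∈ X := by rw [hX, hB]; simp
        have hstrict : s'.card < s.card := by
          apply card_lt_card
          rw [Finset.ssubset_iff_of_subset hsub]
          exact ⟨v, hv, by rw [hs', mem_sdiff]; exact fun h => h.2 hvX⟩
        obtain ⟨t', ht'sub, ht'ind, ht'card⟩ := IH s' (by omega)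
          (fun z hz => (card_le_card (nbrIn_mono hsub z)).trans (hdeg z (hsub hz)))
        have hmemX : ∀ z ∈ t', z ∉ X := by
          intro z hz
          have := ht'sub hz
          rw [hs', mem_sdiff] at this
          exact this.2
        have hkeyv : ∀ z ∈ t', ¬ G.Adj v z := by
          intro z hz hadj
          have hzn : z ∈ nbrIn G s v := mem_nbrIn.2 ⟨hsub (ht'sub hz), hadj⟩
          rw [hnv] at hzn
          refine hmemX z hz ?_
          rw [hX, hB]
          rcases mem_insert.1 hzn with h' | h'
          · simp [h']
          · simp [mem_singleton.1 h']
        have hkeyx : ∀ z ∈ t', ¬ G.Adj x z := by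
          intro z hz hadj
          have hzn : z ∈ nbrIn G s x := mem_nbrIn.2 ⟨hsub (ht'sub hz), hadj⟩
          refine hmemX z hz ?_
          rw [hX]
          by_cases hzu : z = u
          · rw [hB]; simp [hzu]
          · exact mem_union_left _ (mem_union_right _ (mem_sdiff.2 ⟨hzn, by simp [hzu]⟩))
        have hkeyy : ∀ z ∈ t', ¬ G.Adj y z := by
          intro z hz hadj
          have hzn : z ∈ nbrIn G s y := mem_nbrIn.2 ⟨hsub (ht'sub hz), hadj⟩
          refine hmemX z hz ?_
          rw [hX]
          by_cases hzw : z = w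
          · rw [hB]; simp [hzw]
          · exact mem_union_right _ (mem_sdiff.2 ⟨hzn, by simp [hzw]⟩)
        have hvt' : v ∉ t' := fun h => hmemX v h hvX
        have hxt' : x ∉ t' := fun h => hmemX x h (by rw [hX, hB]; simp)
        have hyt' : y ∉ t' := fun h => hmemX y h (by rw [hX, hB]; simp)
        refine ⟨insert v (insert x (insert y t')), ?_, ?_, ?_⟩
        · intro z hz
          rcases mem_insert.1 hz with rfl | hz
          · exact hv
          rcases mem_insert.1 hz with rfl | hz
          · exact hx.1
          rcases mem_insert.1 hz with rfl | hz
          · exact hy.1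
          · exact hsub (ht'sub hz)
        · refine indep_insert (indep_insert (indep_insert ht'ind hkeyy) ?_) ?_
          · intro z hz
            rcases mem_insert.1 hz with rfl | hz
            · exact hnadjxy
            · exact hkeyx z hz
          · intro z hz
            rcases mem_insert.1 hz with rfl | hz
            · exact hnadjvx
            rcases mem_insert.1 hz with rfl | hz
            · exact hnadjvy
            · exact hkeyv z hz
        · rw [card_insert_of_notMem (by simp only [mem_insert]; push_neg; exact ⟨hxv.symm, hyv.symm, hvt'⟩),
            card_insert_of_notMem (by simp only [mem_insert]; push_neg; exact ⟨hxy, hxt'⟩),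
            card_insert_of_notMem hyt']
          have hge := card_sdiff_ge s X
          rw [← hs'] at hge
          omega

lemma indep_singleton (z : V) : IndSet G ({z} : Finset V) := by
  intro x hx y hy hne
  rw [mem_singleton.1 hx, mem_singleton.1 hy] at hne
  exact absurd rfl hne

include hT in
lemma two_indep {s : Finset V} (h3 : 3 ≤ s.card) :
    ∃ x ∈ s, ∃ y ∈ s, x ≠ y ∧ ¬ G.Adj x y := by
  obtain ⟨t, hts, ht3⟩ := Finset.exists_subset_card_eq h3
  obtain ⟨a, b, c, hab, hac, hbc, rfl⟩ := card_eq_three.1 ht3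
  have ha : a ∈ s := hts (by simp)
  have hb : b ∈ s := hts (by simp)
  have hc : c ∈ s := hts (by simp)
  by_cases h1 : G.Adj a b
  · by_cases h2 : G.Adj b c
    · by_cases h3' : G.Adj c a
      · exact absurd h3' (fun h => hT a b c h1 h2 h)
      · exact ⟨c, hc, a, ha, hac.symm, fun h => h3' h⟩
    · exact ⟨b, hb, c, hc, hbc, h2⟩
  · exact ⟨a, ha, b, hb, hab, h1⟩

include hT in
lemma three_indep {s : Finset V} (h6 : 6 ≤ s.card) :
    ∃ t ⊆ s, IndSet G t ∧ t.card = 3 := by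
  have hne : s.Nonempty := card_pos.1 (by omega)
  obtain ⟨v, hv⟩ := hne
  by_cases hA : 3 ≤ (nbrIn G s v).card
  · obtain ⟨t, htA, ht3⟩ := Finset.exists_subset_card_eq hA
    exact ⟨t, htA.trans nbrIn_subset, indSet_subset htA (nbrIn_indep hT), ht3⟩
  · push_neg at hA
    set B : Finset V := s \ insert v (nbrIn G s v) with hBdef
    have hBcard : 3 ≤ B.card := by
      have h1 := card_sdiff_ge s (insert v (nbrIn G s v))
      have h2 := card_insert_le v (nbrIn G s v)
      rw [← hBdef] at h1
      omega
    have hBprop : ∀ b ∈ B, b ≠ v ∧ ¬ G.Adj v b := by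
      intro b hb
      rw [hBdef, mem_sdiff, mem_insert] at hb
      push_neg at hb
      exact ⟨hb.2.1, fun h => hb.2.2 (mem_nbrIn.2 ⟨hb.1, h⟩)⟩
    have hBs : B ⊆ s := hBdef ▸ sdiff_subset
    obtain ⟨t, htB, ht3⟩ := Finset.exists_subset_card_eq hBcard
    obtain ⟨a, b, c, hab, hac, hbc, rfl⟩ := card_eq_three.1 ht3
    have ha : a ∈ B := htB (by simp)
    have hb : b ∈ B := htB (by simp)
    have hc : c ∈ B := htB (by simp)
    have hmk : ∀ p q : V, p ∈ B → q ∈ B → p ≠ q → ¬ G.Adj p q →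
        ∃ t ⊆ s, IndSet G t ∧ t.card = 3 := by
      intro p q hp hq hpq hnadj
      refine ⟨insert v (insert p ({q} : Finset V)), ?_, ?_, ?_⟩
      · intro z hz
        rcases mem_insert.1 hz with rfl | hz
        · exact hv
        rcases mem_insert.1 hz with rfl | hz
        · exact hBs hp
        · rw [mem_singleton.1 hz]; exact hBs hq
      · refine indep_insert (indep_insert (indep_singleton q) ?_) ?_
        · intro z hz
          rw [mem_singleton.1 hz]
          exact hnadj
        · intro z hz
          rcases mem_insert.1 hz with hz1 | hz1
          · rw [hz1]; exact (hBprop p hp).2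
          · rw [mem_singleton.1 hz1]; exact (hBprop q hq).2
      · rw [card_insert_of_notMem, card_insert_of_notMem (by simp [hpq]), card_singleton]
        simp only [mem_insert, mem_singleton]
        push_neg
        exact ⟨fun h => (hBprop p hp).1 h.symm, fun h => (hBprop q hq).1 h.symm⟩
    by_cases h1 : G.Adj a b
    · by_cases h2 : G.Adj b c
      · by_cases h3' : G.Adj c a
        · exact absurd h3' (fun h => hT a b c h1 h2 h)
        · exact hmk c a hc ha hac.symm (fun h => h3' h)
      · exact hmk b c hb hc hbc h2
    · exact hmk a b ha hb hab h1

include hT in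
lemma far_union_two {s : Finset V} {v x y : V} (hx : x ∈ farIn G s v) (hy : y ∈ farIn G s v)
    (hxy : x ≠ y) (hnadj : ¬ G.Adj x y) : IndSet G (insert x (insert y (nbrIn G s v))) := by
  refine indep_insert (indep_insert (nbrIn_indep hT) ?_) ?_
  · intro z hz hadj
    exact far_nonadj hy hz hadj.symm
  · intro z hz
    rcases mem_insert.1 hz with rfl | hz
    · exact hnadj
    · exact fun hadj => far_nonadj hx hz hadj.symm

lemma far_not_nbr {s : Finset V} {v x : V} (hx : x ∈ farIn G s v) : x ∉ nbrIn G s v :=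
  fun h => (disjoint_left.1 disj_nbr_far) h hx

lemma lower12 {G : SimpleGraph (Fin 12)} (hG : NoC3C5 G) :
    ∃ s : Finset (Fin 12), IndSet G s ∧ 5 ≤ s.card := by
  have hT := noTri hG
  have hP := noPent hG
  by_contra hcon
  push_neg at hcon
  have hmax : ∀ s : Finset (Fin 12), IndSet G s → s.card ≤ 4 := by
    intro s hs
    have := hcon s hs
    omega
  have hUcard : (Finset.univ : Finset (Fin 12)).card = 12 := by simp
  have hN2 : ∀ v : Fin 12, (n2In G Finset.univ v).card ≤ 3 := by
    intro v
    have hvn : v ∉ n2In G Finset.univ v := fun h => (mem_n2In.1 h).2.1 rfl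
    have := hmax _ (vn2In_indep hT hP (s := Finset.univ) (v := v))
    rw [card_insert_of_notMem hvn] at this
    omega
  have hdeg4 : ∀ v : Fin 12, (nbrIn G Finset.univ v).card ≤ 4 :=
    fun v => hmax _ (nbrIn_indep hT)
  by_cases h4 : ∃ v : Fin 12, (nbrIn G Finset.univ v).card = 4
  · obtain ⟨v, hd⟩ := h4
    have hsplit := card_split (G := G) (s := Finset.univ) (v := v) (mem_univ v)
    have hfar : 1 ≤ (farIn G Finset.univ v).card := by
      have := hN2 v
      omega
    obtain ⟨x, hx⟩ := card_pos.1 (show 0 < (farIn G Finset.univ v).card by omega)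
    have hind : IndSet G (insert x (nbrIn G Finset.univ v)) :=
      indep_insert (nbrIn_indep hT) (fun z hz hadj => far_nonadj hx hz hadj.symm)
    have := hmax _ hind
    rw [card_insert_of_notMem (far_not_nbr hx)] at this
    omega
  by_cases h3 : ∃ v : Fin 12, (nbrIn G Finset.univ v).card = 3
  · obtain ⟨v, hd⟩ := h3
    have hsplit := card_split (G := G) (s := Finset.univ) (v := v) (mem_univ v)
    have hfar : 3 ≤ (farIn G Finset.univ v).card := by
      have := hN2 v
      omega
    obtain ⟨x, hx, y, hy, hxy, hnadj⟩ := two_indep hT hfar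
    have hind := far_union_two hT hx hy hxy hnadj
    have := hmax _ hind
    rw [card_insert_of_notMem, card_insert_of_notMem (far_not_nbr hy)] at this
    · omega
    · simp only [mem_insert]
      push_neg
      exact ⟨hxy, far_not_nbr hx⟩
  · push_neg at h4 h3
    have hall : ∀ v ∈ (Finset.univ : Finset (Fin 12)), (nbrIn G Finset.univ v).card ≤ 2 := by
      intro v _
      have := hdeg4 v
      have := h4 v
      have := h3 v
      omega
    obtain ⟨t, -, htind, htcard⟩ := lemA hT hP 12 Finset.univ (by omega) hall
    have := hmax t htind
    rw [hUcard] at htcard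
    omega

lemma lower16 {G : SimpleGraph (Fin 16)} (hG : NoC3C5 G) :
    ∃ s : Finset (Fin 16), IndSet G s ∧ 7 ≤ s.card := by
  have hT := noTri hG
  have hP := noPent hG
  by_contra hcon
  push_neg at hcon
  have hmax : ∀ s : Finset (Fin 16), IndSet G s → s.card ≤ 6 := by
    intro s hs
    have := hcon s hs
    omega
  have hUcard : (Finset.univ : Finset (Fin 16)).card = 16 := by simp
  have hN2 : ∀ v : Fin 16, (n2In G Finset.univ v).card ≤ 5 := by
    intro v
    have hvn : v ∉ n2In G Finset.univ v := fun h => (mem_n2In.1 h).2.1 rfl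
    have := hmax _ (vn2In_indep hT hP (s := Finset.univ) (v := v))
    rw [card_insert_of_notMem hvn] at this
    omega
  have hdeg6 : ∀ v : Fin 16, (nbrIn G Finset.univ v).card ≤ 6 :=
    fun v => hmax _ (nbrIn_indep hT)
  by_cases hbig : ∃ v : Fin 16, 4 ≤ (nbrIn G Finset.univ v).card
  · obtain ⟨v, hd⟩ := hbig
    have hsplit := card_split (G := G) (s := Finset.univ) (v := v) (mem_univ v)
    have hn2v := hN2 v
    have hd6 := hdeg6 v
    by_cases hc6 : (nbrIn G Finset.univ v).card = 6
    · have hfar : 1 ≤ (farIn G Finset.univ v).card := by omega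
      obtain ⟨x, hx⟩ := card_pos.1 (show 0 < (farIn G Finset.univ v).card by omega)
      have hind : IndSet G (insert x (nbrIn G Finset.univ v)) :=
        indep_insert (nbrIn_indep hT) (fun z hz hadj => far_nonadj hx hz hadj.symm)
      have := hmax _ hind
      rw [card_insert_of_notMem (far_not_nbr hx)] at this
      omega
    by_cases hc5 : (nbrIn G Finset.univ v).card = 5
    · have hfar : 3 ≤ (farIn G Finset.univ v).card := by omega
      obtain ⟨x, hx, y, hy, hxy, hnadj⟩ := two_indep hT hfar
      have hind := far_union_two hT hx hy hxy hnadj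
      have := hmax _ hind
      rw [card_insert_of_notMem, card_insert_of_notMem (far_not_nbr hy)] at this
      · omega
      · simp only [mem_insert]
        push_neg
        exact ⟨hxy, far_not_nbr hx⟩
    · -- degree 4
      have hfar : 6 ≤ (farIn G Finset.univ v).card := by omega
      obtain ⟨t3, ht3sub, ht3ind, ht3card⟩ := three_indep hT hfar
      have hind := nbr_union_indep hT ht3sub ht3ind
      have := hmax _ hind
      rw [card_nbr_union ht3sub] at this
      omega
  push_neg at hbig
  by_cases h3 : ∃ v : Fin 16, (nbrIn G Finset.univ v).card = 3
  · obtain ⟨v, hd⟩ := h3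
    set F : Finset (Fin 16) := farIn G Finset.univ v with hFdef
    set N2 : Finset (Fin 16) := n2In G Finset.univ v with hN2def
    have hsplitv := card_split (G := G) (s := Finset.univ) (v := v) (mem_univ v)
    have hn2v := hN2 v
    have hF7 : 7 ≤ F.card := by
      rw [hFdef]
      omega
    have hF4 : ∀ t ⊆ F, IndSet G t → t.card ≤ 3 := by
      intro t htF htind
      by_contra hc
      push_neg at hc
      have hind := nbr_union_indep hT (hFdef ▸ htF) htind
      have := hmax _ hind
      rw [card_nbr_union (hFdef ▸ htF)] at this
      omega
    have hFle : F.card ≤ 16 :=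
      le_trans (card_le_card (subset_univ F)) (le_of_eq hUcard)
    have hFdeg : ∀ w ∈ F, (nbrIn G F w).card ≤ 2 := by
      intro w hw
      by_contra hc2
      push_neg at hc2
      have h3' : (nbrIn G F w).card = 3 := by
        have hle := card_le_card (nbrIn_mono (G := G) (s := F) (t := Finset.univ) (subset_univ F) w)
        have := hbig w
        omega
      have hn2w : (n2In G F w).card ≤ 2 := by
        by_contra hc3
        push_neg at hc3
        have hind := vn2In_indep hT hP (s := F) (v := w)
        have hsubF : insert w (n2In G F w) ⊆ F := insert_subset hw n2In_subset
        have := hF4 _ hsubF hind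
        rw [card_insert_of_notMem (fun h => (mem_n2In.1 h).2.1 rfl)] at this
        omega
      have hsplitw := card_split (G := G) (s := F) (v := w) hw
      obtain ⟨z, hz⟩ := card_pos.1 (show 0 < (farIn G F w).card by omega)
      have hind : IndSet G (insert z (nbrIn G F w)) :=
        indep_insert (nbrIn_indep hT) (fun q hq hadj => far_nonadj hz hq hadj.symm)
      have hsubF : insert z (nbrIn G F w) ⊆ F := insert_subset (farIn_subset hz) nbrIn_subset
      have := hF4 _ hsubF hind
      rw [card_insert_of_notMem (far_not_nbr hz), h3'] at this
      omega
    have hFdeg2 : ∀ w ∈ F, (nbrIn G F w).card = 2 := by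
      intro w hw
      by_contra hc2
      have hc1 : (nbrIn G F w).card ≤ 1 := by
        have := hFdeg w hw
        omega
      set X : Finset (Fin 16) := insert w (nbrIn G F w) with hXdef
      have hXcard : X.card ≤ 2 := (card_insert_le _ _).trans (by omega)
      set F' : Finset (Fin 16) := F \ X with hF'def
      have hF'sub : F' ⊆ F := sdiff_subset
      have hgeF' := card_sdiff_ge F X
      rw [← hF'def] at hgeF'
      obtain ⟨t', ht'sub, ht'ind, ht'card⟩ := lemA hT hP 16 F'
        ((card_le_card (hF'sub.trans (subset_univ F))).trans (le_of_eq hUcard))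
        (fun z hz => (card_le_card (nbrIn_mono hF'sub z)).trans (hFdeg z (hF'sub hz)))
      have h3t : 3 ≤ t'.card := by omega
      have hkey : ∀ z ∈ t', ¬ G.Adj w z := by
        intro z hz hadj
        have hzF' := ht'sub hz
        rw [hF'def, mem_sdiff] at hzF'
        exact hzF'.2 (by rw [hXdef]; exact mem_insert_of_mem (mem_nbrIn.2 ⟨hzF'.1, hadj⟩))
      have hwt' : w ∉ t' := by
        intro h
        have := ht'sub h
        rw [hF'def, mem_sdiff] at this
        exact this.2 (by rw [hXdef]; exact mem_insert_self _ _)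
      have hind := indep_insert ht'ind hkey
      have hsubF : insert w t' ⊆ F := insert_subset hw (ht'sub.trans hF'sub)
      have := hF4 _ hsubF hind
      rw [card_insert_of_notMem hwt'] at this
      omega
    have hF8 : F.card ≤ 7 := by
      by_contra hc
      push_neg at hc
      obtain ⟨t, htsub, htind, htcard⟩ := lemA hT hP 16 F (by omega) hFdeg
      have := hF4 t htsub htind
      omega
    have hFcard : F.card = 7 := le_antisymm hF8 hF7
    have hexact := exact_split (G := G) (s := Finset.univ) (v := v) (mem_univ v)
    have hN2card : N2.card = 5 := by
      rw [hN2def]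
      rw [hFdef] at hFcard
      omega
    have hdisjN2F : Disjoint N2 F := hN2def ▸ hFdef ▸ disj_n2_far
    have hxN2le : ∀ x ∈ F, (nbrIn G N2 x).card ≤ 1 := by
      intro x hx
      have hdisj2 : Disjoint (nbrIn G F x) (nbrIn G N2 x) :=
        Finset.disjoint_of_subset_left nbrIn_subset
          (Finset.disjoint_of_subset_right nbrIn_subset hdisjN2F.symm)
      have hsubU : nbrIn G F x ∪ nbrIn G N2 x ⊆ nbrIn G Finset.univ x :=
        union_subset (nbrIn_mono (subset_univ F) x) (nbrIn_mono (subset_univ N2) x)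
      have hle := card_le_card hsubU
      rw [card_union_of_disjoint hdisj2] at hle
      have h2 := hFdeg2 x hx
      have h3' := hbig x
      omega
    by_cases hopt : ∃ x ∈ F, (nbrIn G N2 x).card = 0
    · obtain ⟨x, hxF, hx0⟩ := hopt
      have hxnadjN2 : ∀ z ∈ N2, ¬ G.Adj x z := by
        intro z hz hadj
        have hmem : z ∈ nbrIn G N2 x := mem_nbrIn.2 ⟨hz, hadj⟩
        rw [card_eq_zero.1 hx0] at hmem
        exact notMem_empty z hmem
      have hxv : x ≠ v := (mem_farIn.1 (hFdef ▸ hxF)).2.1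
      have hnadjvx : ¬ G.Adj v x := (mem_farIn.1 (hFdef ▸ hxF)).2.2.1
      have hind : IndSet G (insert x (insert v N2)) := by
        refine indep_insert (hN2def ▸ vn2In_indep hT hP) ?_
        intro z hz
        rcases mem_insert.1 hz with hz1 | hz1
        · rw [hz1]
          exact fun h => hnadjvx h.symm
        · exact hxnadjN2 z hz1
      have hvN2 : v ∉ N2 := fun h => (mem_n2In.1 (hN2def ▸ h)).2.1 rfl
      have hxN2 : x ∉ N2 := disjoint_right.1 hdisjN2F hxF
      have hfin := hmax _ hind
      rw [card_insert_of_notMem (by simp only [mem_insert]; push_neg; exact ⟨hxv, hxN2⟩),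
        card_insert_of_notMem hvN2, hN2card] at hfin
      omega
    · push_neg at hopt
      have huniq : ∀ x ∈ F, (nbrIn G N2 x).card = 1 := by
        intro x hx
        have h1 := hxN2le x hx
        have h2 := hopt x hx
        omega
      have hfex : ∀ x, x ∈ F → ∃ p, nbrIn G N2 x = {p} :=
        fun x hx => card_eq_one.1 (huniq x hx)
      set f : Fin 16 → Fin 16 :=
        fun x => if h : ∃ p, nbrIn G N2 x = {p} then h.choose else v with hfdef
      have hfmem : ∀ x ∈ F, nbrIn G N2 x = {f x} := by
        intro x hx
        have h := hfex x hx
        rw [hfdef]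
        simp only [dif_pos h]
        exact h.choose_spec
      have hadjf : ∀ x ∈ F, G.Adj x (f x) := by
        intro x hx
        have hm : f x ∈ nbrIn G N2 x := by rw [hfmem x hx]; exact mem_singleton_self _
        exact (mem_nbrIn.1 hm).2
      have hfN2 : ∀ x ∈ F, f x ∈ N2 := by
        intro x hx
        have hm : f x ∈ nbrIn G N2 x := by rw [hfmem x hx]; exact mem_singleton_self _
        exact nbrIn_subset hm
      obtain ⟨f1, hf1, f2, hf2, hf12, hfeq⟩ :=
        Finset.exists_ne_map_eq_of_card_lt_of_maps_to
          (show N2.card < F.card by omega) hfN2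
      have hadj1 : G.Adj f1 (f f1) := hadjf f1 hf1
      have hadj2 : G.Adj f2 (f f1) := by rw [hfeq]; exact hadjf f2 hf2
      have hnadjf12 : ¬ G.Adj f1 f2 := fun h => hT f1 f2 (f f1) h hadj2 hadj1.symm
      set Y : Finset (Fin 16) := insert f1 (insert f2 (nbrIn G F f1 ∪ nbrIn G F f2)) with hYdef
      have hYcard : Y.card ≤ 6 := by
        have h1 := card_insert_le f1 (insert f2 (nbrIn G F f1 ∪ nbrIn G F f2))
        have h2 := card_insert_le f2 (nbrIn G F f1 ∪ nbrIn G F f2)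
        have h3' := card_union_le (nbrIn G F f1) (nbrIn G F f2)
        have h4 := hFdeg2 f1 hf1
        have h5 := hFdeg2 f2 hf2
        rw [hYdef]
        omega
      have hgeY := card_sdiff_ge F Y
      obtain ⟨g, hg⟩ := card_pos.1 (show 0 < (F \ Y).card by omega)
      rw [mem_sdiff] at hg
      obtain ⟨hgF, hgY⟩ := hg
      rw [hYdef] at hgY
      simp only [mem_insert, mem_union, not_or] at hgY
      obtain ⟨hgf1, hgf2, hgn1, hgn2⟩ := hgY
      have hnadjg1 : ¬ G.Adj f1 g := fun h => hgn1 (mem_nbrIn.2 ⟨hgF, h⟩)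
      have hnadjg2 : ¬ G.Adj f2 g := fun h => hgn2 (mem_nbrIn.2 ⟨hgF, h⟩)
      set N2' : Finset (Fin 16) := N2 \ ({f f1, f g} : Finset (Fin 16)) with hN2'def
      have hN2'card : 3 ≤ N2'.card := by
        have h1 := card_sdiff_ge N2 ({f f1, f g} : Finset (Fin 16))
        have h2 := card_insert_le (f f1) ({f g} : Finset (Fin 16))
        rw [← hN2'def] at h1
        simp only [card_singleton] at h2
        omega
      have hN2'sub : N2' ⊆ N2 := sdiff_subset
      have hN2'ind : IndSet G N2' := indSet_subset hN2'sub (hN2def ▸ n2In_indep hT hP)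
      have hnotmem : ∀ z ∈ N2', z ≠ f f1 ∧ z ≠ f g := by
        intro z hz
        rw [hN2'def, mem_sdiff] at hz
        have hh := hz.2
        simp only [mem_insert, mem_singleton, not_or] at hh
        exact hh
      have hkey1 : ∀ z ∈ N2', ¬ G.Adj f1 z := by
        intro z hz hadj
        have hm : z ∈ nbrIn G N2 f1 := mem_nbrIn.2 ⟨hN2'sub hz, hadj⟩
        rw [hfmem f1 hf1, mem_singleton] at hm
        exact (hnotmem z hz).1 hm
      have hkey2 : ∀ z ∈ N2', ¬ G.Adj f2 z := by
        intro z hz hadj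
        have hm : z ∈ nbrIn G N2 f2 := mem_nbrIn.2 ⟨hN2'sub hz, hadj⟩
        rw [hfmem f2 hf2, mem_singleton, ← hfeq] at hm
        exact (hnotmem z hz).1 hm
      have hkeyg : ∀ z ∈ N2', ¬ G.Adj g z := by
        intro z hz hadj
        have hm : z ∈ nbrIn G N2 g := mem_nbrIn.2 ⟨hN2'sub hz, hadj⟩
        rw [hfmem g hgF, mem_singleton] at hm
        exact (hnotmem z hz).2 hm
      have hfarv : ∀ x, x ∈ F → x ≠ v ∧ ¬ G.Adj v x := by
        intro x hx
        have hh := mem_farIn.1 (hFdef ▸ hx)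
        exact ⟨hh.2.1, hh.2.2.1⟩
      have hN2adjv : ∀ z ∈ N2, ¬ G.Adj v z := fun z hz => (mem_n2In.1 (hN2def ▸ hz)).2.2.1
      have hFnotN2' : ∀ x, x ∈ F → x ∉ N2' :=
        fun x hx h => disjoint_right.1 hdisjN2F hx (hN2'sub h)
      have hind : IndSet G (insert v (insert f1 (insert f2 (insert g N2')))) := by
        refine indep_insert (indep_insert (indep_insert (indep_insert hN2'ind hkeyg) ?_) ?_) ?_
        · intro z hz
          rcases mem_insert.1 hz with hz1 | hz1
          · rw [hz1]; exact hnadjg2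
          · exact hkey2 z hz1
        · intro z hz
          rcases mem_insert.1 hz with hz1 | hz1
          · rw [hz1]; exact hnadjf12
          rcases mem_insert.1 hz1 with hz2 | hz2
          · rw [hz2]; exact hnadjg1
          · exact hkey1 z hz2
        · intro z hz
          rcases mem_insert.1 hz with hz1 | hz1
          · rw [hz1]; exact (hfarv f1 hf1).2
          rcases mem_insert.1 hz1 with hz2 | hz2
          · rw [hz2]; exact (hfarv f2 hf2).2
          rcases mem_insert.1 hz2 with hz3 | hz3
          · rw [hz3]; exact (hfarv g hgF).2
          · exact hN2adjv z (hN2'sub hz3)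
      have hvN2 : v ∉ N2 := fun h => (mem_n2In.1 (hN2def ▸ h)).2.1 rfl
      have hnm4 : g ∉ N2' := hFnotN2' g hgF
      have hnm3 : f2 ∉ insert g N2' := by
        simp only [mem_insert]
        push_neg
        exact ⟨fun h => hgf2 h.symm, hFnotN2' f2 hf2⟩
      have hnm2 : f1 ∉ insert f2 (insert g N2') := by
        simp only [mem_insert]
        push_neg
        exact ⟨hf12, fun h => hgf1 h.symm, hFnotN2' f1 hf1⟩
      have hnm1 : v ∉ insert f1 (insert f2 (insert g N2')) := by
        simp only [mem_insert]
        push_neg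
        exact ⟨((hfarv f1 hf1).1).symm, ((hfarv f2 hf2).1).symm, ((hfarv g hgF).1).symm,
          fun h => hvN2 (hN2'sub h)⟩
      have hfin := hmax _ hind
      rw [card_insert_of_notMem hnm1, card_insert_of_notMem hnm2,
        card_insert_of_notMem hnm3, card_insert_of_notMem hnm4] at hfin
      omega
  · push_neg at h3
    have hall : ∀ v ∈ (Finset.univ : Finset (Fin 16)), (nbrIn G Finset.univ v).card ≤ 2 := by
      intro v _
      have h1 := hbig v
      have h2 := h3 v
      omega
    obtain ⟨t, -, htind, htcard⟩ := lemA hT hP 16 Finset.univ (by omega) hall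
    have := hmax t htind
    rw [hUcard] at htcard
    omega

end Lower

/-- `f(12) = 5` and `f(16) = 7`. -/
theorem fmin_values' : fmin 12 = 5 ∧ fmin 16 = 7 := by
  have hmem12 : (5 : ℕ) ∈ {k | ∃ G : SimpleGraph (Fin 12), NoC3C5 G ∧ indepNum G = k} :=
    ⟨ML12, ML12_no, ML12_alpha⟩
  have hmem16 : (7 : ℕ) ∈ {k | ∃ G : SimpleGraph (Fin 16), NoC3C5 G ∧ indepNum G = k} :=
    ⟨ML16, ML16_no, ML16_alpha⟩
  constructor
  · apply le_antisymm (Nat.sInf_le hmem12)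
    apply le_csInf ⟨5, hmem12⟩
    rintro k ⟨G, hG, rfl⟩
    exact le_indepNum (lower12 hG)
  · apply le_antisymm (Nat.sInf_le hmem16)
    apply le_csInf ⟨7, hmem16⟩
    rintro k ⟨G, hG, rfl⟩
    exact le_indepNum (lower16 hG)

end
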